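/- Under Assumption A1, for every m ∈ C_m and every relaxed control α ∈ 𝒜, the constraint set R[m;α] is a compact subset of 𝒱 (with the product topology of weak convergence). -/

import Mathlib

open MeasureTheory Filter Topology

/-- Borel subprobability measures on `E` with the topology of weak convergence. -/
abbrev SubProb (E : Type*) [MeasurableSpace E] : Type _ :=
  {μ : FiniteMeasure E // μ Set.univ ≤ 1}


open Set TopologicalSpace BoundedContinuousFunction NNReal ENNReal

set_option maxHeartbeats 1000000

section RieszLimit

variable {X : Type*} [MetricSpace X] [CompactSpace X] [MeasurableSpace X] [BorelSpace X]

private lemma cm_integrable (h : C(X, ℝ)) (μ : Measure X) [IsFiniteMeasure μ] :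
    Integrable (fun x => h x) μ := by
  exact (BoundedContinuousFunction.integrable μ (mkOfCompact h))

/-- From convergence of integrals of all continuous test functions along a sequence of
probability measures, produce a limit probability measure (Riesz-content construction). -/
theorem exists_probabilityMeasure_tendsto_of_forall_integral_tendsto
    (ν : ℕ → ProbabilityMeasure X) (Λ : C(X, ℝ) → ℝ)
    (hΛ : ∀ h : C(X, ℝ), Tendsto (fun n => ∫ x, h x ∂(ν n : Measure X)) atTop (𝓝 (Λ h))) :
    ∃ μ : ProbabilityMeasure X, Tendsto ν atTop (𝓝 μ) := by
  classical
  -- basic properties of Λ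
  have hΛadd : ∀ g h : C(X, ℝ), Λ (g + h) = Λ g + Λ h := by
    intro g h
    refine tendsto_nhds_unique (hΛ (g + h)) ?_
    have : (fun n => ∫ x, (g + h) x ∂(ν n : Measure X))
        = fun n => (∫ x, g x ∂(ν n : Measure X)) + ∫ x, h x ∂(ν n : Measure X) := by
      funext n
      simp only [ContinuousMap.add_apply]
      exact integral_add (cm_integrable g _) (cm_integrable h _)
    rw [this]
    exact (hΛ g).add (hΛ h)
  have hΛmono : ∀ g h : C(X, ℝ), (∀ x, g x ≤ h x) → Λ g ≤ Λ h := by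
    intro g h hgh
    exact le_of_tendsto_of_tendsto' (hΛ g) (hΛ h) fun n =>
      integral_mono (cm_integrable g _) (cm_integrable h _) hgh
  have hΛnonneg : ∀ h : C(X, ℝ), (∀ x, 0 ≤ h x) → 0 ≤ Λ h := by
    intro h hh
    exact ge_of_tendsto (hΛ h) (Eventually.of_forall fun n => integral_nonneg fun x => hh x)
  have hΛone : Λ 1 = 1 := by
    refine tendsto_nhds_unique (hΛ 1) ?_
    have : (fun n => ∫ x, (1 : C(X, ℝ)) x ∂(ν n : Measure X)) = fun _ => (1 : ℝ) := by
      funext n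
      simp [ContinuousMap.one_apply]
    rw [this]
    exact tendsto_const_nhds
  -- the Riesz content
  set T : Set X → Set ℝ :=
    fun K => Λ '' {h : C(X, ℝ) | (∀ x, 0 ≤ h x) ∧ ∀ x ∈ K, 1 ≤ h x} with hT
  have hTne : ∀ K : Set X, (T K).Nonempty := by
    intro K
    exact ⟨Λ 1, ⟨1, ⟨fun x => zero_le_one, fun x _ => le_refl 1⟩, rfl⟩⟩
  have hTbdd : ∀ K : Set X, BddBelow (T K) := by
    intro K
    refine ⟨0, ?_⟩
    rintro r ⟨h, ⟨h0, -⟩, rfl⟩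
    exact hΛnonneg h h0
  set lam : Set X → ℝ := fun K => sInf (T K) with hlam
  have lam_nonneg : ∀ K, 0 ≤ lam K := by
    intro K
    refine le_csInf (hTne K) ?_
    rintro r ⟨h, ⟨h0, -⟩, rfl⟩
    exact hΛnonneg h h0
  have lam_le : ∀ (K : Set X) (h : C(X, ℝ)), (∀ x, 0 ≤ h x) → (∀ x ∈ K, 1 ≤ h x) →
      lam K ≤ Λ h := by
    intro K h h0 h1
    exact csInf_le (hTbdd K) ⟨h, ⟨h0, h1⟩, rfl⟩
  have lam_mono : ∀ K₁ K₂ : Set X, K₁ ⊆ K₂ → lam K₁ ≤ lam K₂ := by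
    intro K₁ K₂ hsub
    refine csInf_le_csInf (hTbdd K₁) (hTne K₂) ?_
    rintro r ⟨h, ⟨h0, h1⟩, rfl⟩
    exact ⟨h, ⟨h0, fun x hx => h1 x (hsub hx)⟩, rfl⟩
  have lam_sup_le : ∀ K₁ K₂ : Set X, lam (K₁ ∪ K₂) ≤ lam K₁ + lam K₂ := by
    intro K₁ K₂
    refine le_of_forall_pos_le_add ?_
    intro ε hε
    obtain ⟨r₁, ⟨h₁, ⟨h₁0, h₁1⟩, rfl⟩, hr₁⟩ :=
      exists_lt_of_csInf_lt (hTne K₁) (lt_add_of_pos_right (lam K₁) (half_pos hε))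
    obtain ⟨r₂, ⟨h₂, ⟨h₂0, h₂1⟩, rfl⟩, hr₂⟩ :=
      exists_lt_of_csInf_lt (hTne K₂) (lt_add_of_pos_right (lam K₂) (half_pos hε))
    have : lam (K₁ ∪ K₂) ≤ Λ (h₁ + h₂) := by
      refine lam_le _ _ (fun x => add_nonneg (h₁0 x) (h₂0 x)) ?_
      rintro x (hx | hx)
      · exact le_add_of_le_of_nonneg (h₁1 x hx) (h₂0 x)
      · exact le_add_of_nonneg_of_le (h₁0 x) (h₂1 x hx)
    rw [hΛadd h₁ h₂] at this
    linarith
  -- additivity on disjoint compact sets, via Urysohn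
  have lam_sup_disjoint : ∀ K₁ K₂ : Set X, IsCompact K₁ → IsClosed K₂ → Disjoint K₁ K₂ →
      lam K₁ + lam K₂ ≤ lam (K₁ ∪ K₂) := by
    intro K₁ K₂ hK₁ hK₂ hdis
    obtain ⟨g, hg1, hg0, -, hg01⟩ := exists_continuous_one_zero_of_isCompact hK₁ hK₂ hdis
    refine le_csInf (hTne (K₁ ∪ K₂)) ?_
    rintro r ⟨h, ⟨h0, h1⟩, rfl⟩
    have e : Λ (h * g) + Λ (h * (1 - g)) = Λ h := by
      rw [← hΛadd]
      congr 1
      ext x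
      simp only [ContinuousMap.add_apply, ContinuousMap.mul_apply, ContinuousMap.sub_apply,
        ContinuousMap.one_apply]
      ring
    have i₁ : lam K₁ ≤ Λ (h * g) := by
      refine lam_le _ _ (fun x => mul_nonneg (h0 x) (hg01 x).1) ?_
      intro x hx
      have := h1 x (Or.inl hx)
      have hgx : g x = 1 := hg1 hx
      simp only [ContinuousMap.mul_apply, hgx, mul_one]
      exact this
    have i₂ : lam K₂ ≤ Λ (h * (1 - g)) := by
      refine lam_le _ _ (fun x => mul_nonneg (h0 x) (by simpa using (hg01 x).2)) ?_
      intro x hx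
      have := h1 x (Or.inr hx)
      have hgx : g x = 0 := hg0 hx
      simp only [ContinuousMap.mul_apply, ContinuousMap.sub_apply, ContinuousMap.one_apply,
        hgx, sub_zero, mul_one]
      exact this
    calc lam K₁ + lam K₂ ≤ Λ (h * g) + Λ (h * (1 - g)) := add_le_add i₁ i₂
      _ = Λ h := e
  -- the content
  set C : Content X :=
    { toFun := fun K => Real.toNNReal (lam K)
      mono' := fun K₁ K₂ h => Real.toNNReal_mono (lam_mono _ _ h)
      sup_disjoint' := by
        intro K₁ K₂ hdis hcl₁ hcl₂
        have h₁ : lam ((K₁ ⊔ K₂ : Compacts X) : Set X) = lam K₁ + lam K₂ := by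
          refine le_antisymm (lam_sup_le _ _) (lam_sup_disjoint _ _ K₁.2 hcl₂ hdis)
        show Real.toNNReal (lam ((K₁ ⊔ K₂ : Compacts X) : Set X))
            = Real.toNNReal (lam K₁) + Real.toNNReal (lam K₂)
        rw [h₁, Real.toNNReal_add (lam_nonneg _) (lam_nonneg _)]
      sup_le' := by
        intro K₁ K₂
        show Real.toNNReal (lam ((K₁ ⊔ K₂ : Compacts X) : Set X))
            ≤ Real.toNNReal (lam K₁) + Real.toNNReal (lam K₂)
        rw [← Real.toNNReal_add (lam_nonneg _) (lam_nonneg _)]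
        exact Real.toNNReal_mono (lam_sup_le _ _) } with hC
  set μ : Measure X := C.measure with hμ
  have lam_univ : lam univ = 1 := by
    refine le_antisymm ?_ ?_
    · have := lam_le univ 1 (fun x => zero_le_one) (fun x _ => le_refl 1)
      rwa [hΛone] at this
    · refine le_csInf (hTne univ) ?_
      rintro r ⟨h, ⟨h0, h1⟩, rfl⟩
      have := hΛmono 1 h (fun x => by simpa using h1 x (mem_univ x))
      rwa [hΛone] at this
  have hμuniv : μ univ = 1 := by
    rw [hμ, C.measure_apply MeasurableSet.univ, C.outerMeasure_of_isOpen univ isOpen_univ,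
      C.innerContent_of_isCompact isCompact_univ isOpen_univ]
    show ((Real.toNNReal (lam univ) : ℝ≥0) : ℝ≥0∞) = 1
    rw [lam_univ]
    simp
  haveI : IsProbabilityMeasure μ := ⟨hμuniv⟩
  set μP : ProbabilityMeasure X := ⟨μ, this⟩ with hμP
  refine ⟨μP, ?_⟩
  -- key open-set estimate
  refine tendsto_of_forall_isOpen_le_liminf ?_
  intro G hG
  -- reduce to compact subsets
  have key : ∀ K : Compacts X, (K : Set X) ⊆ G →
      (Real.toNNReal (lam K) : ℝ≥0) ≤ liminf (fun n => (ν n) G) atTop := by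
    intro K hKG
    obtain ⟨g, hg1, hg0, -, hg01⟩ :=
      exists_continuous_one_zero_of_isCompact K.2 hG.isClosed_compl
        (disjoint_compl_right_iff_subset.mpr hKG)
    have hle : Real.toNNReal (lam K) ≤ Real.toNNReal (Λ g) :=
      Real.toNNReal_mono (lam_le _ _ (fun x => (hg01 x).1) (fun x hx => (hg1 hx).ge))
    have htd : Tendsto (fun n => Real.toNNReal (∫ x, g x ∂(ν n : Measure X))) atTop
        (𝓝 (Real.toNNReal (Λ g))) :=
      (continuous_real_toNNReal.tendsto _).comp (hΛ g)
    have hbound : ∀ n, Real.toNNReal (∫ x, g x ∂(ν n : Measure X)) ≤ (ν n) G := by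
      intro n
      have hint : ∫ x, g x ∂(ν n : Measure X) ≤ ∫ x, G.indicator (fun _ => (1 : ℝ)) x
          ∂(ν n : Measure X) := by
        refine integral_mono (cm_integrable g _) ?_ ?_
        · exact (integrable_const (1 : ℝ)).indicator hG.measurableSet
        · intro x
          by_cases hx : x ∈ G
          · simpa [indicator_of_mem hx] using (hg01 x).2
          · simp only [indicator_of_notMem hx]
            exact (hg0 hx).le
      rw [integral_indicator_const (1 : ℝ) hG.measurableSet, smul_eq_mul, mul_one] at hint
      have : Real.toNNReal (∫ x, g x ∂(ν n : Measure X))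
          ≤ Real.toNNReal (((ν n : Measure X) G).toReal) := Real.toNNReal_mono hint
      rwa [ENNReal.toReal, Real.toNNReal_coe] at this
    have hlim : Real.toNNReal (Λ g) ≤ liminf (fun n => (ν n) G) atTop := by
      rw [← htd.liminf_eq]
      refine liminf_le_liminf (Eventually.of_forall hbound) ?_ ?_
      · exact ⟨0, Eventually.of_forall fun n => zero_le⟩
      · refine IsBoundedUnder.isCoboundedUnder_ge (isBoundedUnder_of ⟨1, fun n => ?_⟩)
        exact (ν n).apply_le_one G
    exact hle.trans hlim
  -- conclude: μ G = innerContent ≤ liminf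
  have hμG : (μ G : ℝ≥0∞) ≤ ((liminf (fun n => (ν n) G) atTop : ℝ≥0) : ℝ≥0∞) := by
    rw [hμ, C.measure_apply hG.measurableSet, C.outerMeasure_of_isOpen G hG]
    refine iSup₂_le ?_
    intro K hK
    exact ENNReal.coe_le_coe.mpr (key K hK)
  have : (μP G : ℝ≥0∞) ≤ ((liminf (fun n => (ν n) G) atTop : ℝ≥0) : ℝ≥0∞) := by
    rwa [ProbabilityMeasure.ennreal_coeFn_eq_coeFn_toMeasure]
  exact_mod_cast this

end RieszLimit

section Compactness

theorem probabilityMeasure_compactSpace {X : Type*} [TopologicalSpace X]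
    [MetrizableSpace X] [CompactSpace X] [SecondCountableTopology X]
    [MeasurableSpace X] [BorelSpace X] :
    CompactSpace (ProbabilityMeasure X) := by
  letI : MetricSpace X := TopologicalSpace.metrizableSpaceMetric X
  letI : MetricSpace (ProbabilityMeasure X) := TopologicalSpace.metrizableSpaceMetric _
  rw [compactSpace_iff_seqCompactSpace]
  refine ⟨?_⟩
  intro ν _
  have hNE : Nonempty C(X, ℝ) := ⟨0⟩
  set f : ℕ → C(X, ℝ) := TopologicalSpace.denseSeq C(X, ℝ) with hfdef
  have hf : DenseRange f := TopologicalSpace.denseRange_denseSeq _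
  set B : ℕ → Set ℝ := fun k => Icc (-‖f k‖) ‖f k‖ with hB
  have memB : ∀ (ρ : ProbabilityMeasure X) (k : ℕ),
      (∫ x, f k x ∂(ρ : Measure X)) ∈ B k := by
    intro ρ k
    have h1 := norm_integral_le_of_norm_le_const (μ := (ρ : Measure X))
      (Eventually.of_forall fun x => (f k).norm_coe_le_norm x)
    rw [probReal_univ, mul_one, Real.norm_eq_abs, abs_le] at h1
    exact ⟨h1.1, h1.2⟩
  set z : ℕ → (∀ k, B k) := fun n k => ⟨_, memB (ν n) k⟩ with hz
  obtain ⟨a, -, σ, hσmono, hσlim⟩ := isCompact_univ.tendsto_subseq (x := z)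
    (fun n => mem_univ _)
  have hcoord : ∀ k, Tendsto (fun n => ∫ x, f k x ∂(ν (σ n) : Measure X)) atTop (𝓝 (a k)) := by
    intro k
    have hc : Continuous fun p : (∀ k, B k) => (p k : ℝ) :=
      continuous_subtype_val.comp (continuous_apply k)
    exact ((hc.tendsto a).comp hσlim)
  have hdiff : ∀ (g h : C(X, ℝ)) (ρ : ProbabilityMeasure X),
      dist (∫ x, g x ∂(ρ : Measure X)) (∫ x, h x ∂(ρ : Measure X)) ≤ dist g h := by
    intro g h ρ
    rw [Real.dist_eq, ← integral_sub (cm_integrable g _) (cm_integrable h _)]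
    have := norm_integral_le_of_norm_le_const (μ := (ρ : Measure X)) (C := dist g h)
      (Eventually.of_forall fun x => by
        rw [Real.norm_eq_abs, ← Real.dist_eq]
        exact ContinuousMap.dist_apply_le_dist x)
    rwa [probReal_univ, mul_one, Real.norm_eq_abs] at this
  have key : ∀ h : C(X, ℝ),
      ∃ L, Tendsto (fun n => ∫ x, h x ∂(ν (σ n) : Measure X)) atTop (𝓝 L) := by
    intro h
    refine cauchySeq_tendsto_of_complete ?_
    rw [Metric.cauchySeq_iff]
    intro ε hε
    obtain ⟨k, hk⟩ := hf.exists_dist_lt h (show (0:ℝ) < ε/4 by linarith)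
    have ck : CauchySeq fun n => ∫ x, f k x ∂(ν (σ n) : Measure X) := (hcoord k).cauchySeq
    rw [Metric.cauchySeq_iff] at ck
    obtain ⟨N, hN⟩ := ck (ε/4) (by linarith)
    refine ⟨N, fun m hm n hn => ?_⟩
    have e1 := hdiff h (f k) (ν (σ m))
    have e2 := hdiff (f k) h (ν (σ n))
    have e3 := hN m hm n hn
    have tri := dist_triangle4 (∫ x, h x ∂(ν (σ m) : Measure X))
      (∫ x, f k x ∂(ν (σ m) : Measure X)) (∫ x, f k x ∂(ν (σ n) : Measure X))
      (∫ x, h x ∂(ν (σ n) : Measure X))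
    have hsymm : dist h (f k) = dist (f k) h := dist_comm _ _
    linarith
  choose Λ hΛ using key
  obtain ⟨μ, hμ⟩ :=
    exists_probabilityMeasure_tendsto_of_forall_integral_tendsto (fun n => ν (σ n)) Λ hΛ
  exact ⟨μ, mem_univ μ, σ, hσmono, hμ⟩

end Compactness

section SubProbCompact

abbrev SubProbX (E : Type*) [MeasurableSpace E] : Type _ :=
  {μ : FiniteMeasure E // μ Set.univ ≤ 1}

variable {E : Type*} [TopologicalSpace E] [MetrizableSpace E] [CompactSpace E]
  [SecondCountableTopology E] [Nonempty E] [MeasurableSpace E] [BorelSpace E]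

theorem subProb_compactSpace : CompactSpace (SubProbX E) := by
  haveI := probabilityMeasure_compactSpace (X := E × Bool)
  classical
  have hAmeas : MeasurableSet {q : E × Bool | q.2 = true} :=
    (measurableSet_singleton true).preimage measurable_snd
  have hFfin : ∀ ρ : ProbabilityMeasure (E × Bool),
      IsFiniteMeasure (((ρ : Measure (E × Bool)).restrict {q | q.2 = true}).map Prod.fst) :=
    fun ρ => inferInstance
  set ΦF : ProbabilityMeasure (E × Bool) → FiniteMeasure E := fun ρ =>
    ⟨((ρ : Measure (E × Bool)).restrict {q | q.2 = true}).map Prod.fst, hFfin ρ⟩ with hΦF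
  have hΦFcoe : ∀ ρ, (ΦF ρ : Measure E)
      = ((ρ : Measure (E × Bool)).restrict {q | q.2 = true}).map Prod.fst := fun ρ => rfl
  have hmass : ∀ ρ, (ΦF ρ) Set.univ ≤ 1 := by
    intro ρ
    have h1 : (ΦF ρ : Measure E) univ ≤ 1 := by
      rw [hΦFcoe, Measure.map_apply measurable_fst MeasurableSet.univ, preimage_univ,
        Measure.restrict_apply_univ]
      exact prob_le_one
    have h2 := ENNReal.toNNReal_mono ENNReal.one_ne_top h1
    exact h2
  set Φ : ProbabilityMeasure (E × Bool) → SubProbX E := fun ρ => ⟨ΦF ρ, hmass ρ⟩ with hΦ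
  -- the test-function identity
  have hfb : ∀ f : E →ᵇ ℝ≥0, ∃ fB : (E × Bool) →ᵇ ℝ≥0,
      ∀ ρ : ProbabilityMeasure (E × Bool),
        (ΦF ρ).testAgainstNN f = ρ.toFiniteMeasure.testAgainstNN fB := by
    intro f
    have hcont : Continuous fun q : E × Bool => (if q.2 = true then f q.1 else 0 : ℝ≥0) := by
      have heq : (fun q : E × Bool => (if q.2 = true then f q.1 else 0 : ℝ≥0))
          = fun q => ((fun b : Bool => if b = true then (1 : ℝ≥0) else 0) q.2) * f q.1 := by
        funext q
        by_cases h : q.2 = true <;> simp [h]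
      rw [heq]
      exact Continuous.mul
        ((continuous_of_discreteTopology
          (f := fun b : Bool => if b = true then (1 : ℝ≥0) else 0)).comp continuous_snd)
        (f.continuous.comp continuous_fst)
    refine ⟨mkOfCompact ⟨_, hcont⟩, ?_⟩
    intro ρ
    have hmeasf : Measurable fun x : E => (f x : ℝ≥0∞) :=
      measurable_coe_nnreal_ennreal.comp f.continuous.measurable
    have hlin : ∫⁻ x, (f x : ℝ≥0∞)
          ∂(((ρ : Measure (E × Bool)).restrict {q | q.2 = true}).map Prod.fst)
        = ∫⁻ q, ((mkOfCompact ⟨_, hcont⟩ : (E × Bool) →ᵇ ℝ≥0) q : ℝ≥0∞)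
            ∂(ρ : Measure (E × Bool)) := by
      rw [lintegral_map hmeasf measurable_fst, ← lintegral_indicator hAmeas]
      congr 1
      funext q
      by_cases h : q.2 = true
      · have hq : q ∈ {q : E × Bool | q.2 = true} := h
        simp [indicator_of_mem hq, h]
      · have hq : q ∉ {q : E × Bool | q.2 = true} := h
        simp [indicator_of_notMem hq, h]
    show (∫⁻ x, (f x : ℝ≥0∞) ∂((ΦF ρ) : Measure E)).toNNReal = _
    rw [hΦFcoe, hlin]
    rfl
  have hΦc : Continuous Φ := by
    apply Continuous.subtype_mk
    rw [continuous_iff_continuousAt]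
    intro ρ0
    rw [ContinuousAt, FiniteMeasure.tendsto_iff_forall_testAgainstNN_tendsto]
    intro f
    obtain ⟨fB, hfB⟩ := hfb f
    have hre : (fun ρ : ProbabilityMeasure (E × Bool) => (ΦF ρ).testAgainstNN f)
        = fun ρ => ρ.toFiniteMeasure.testAgainstNN fB := funext hfB
    show Tendsto (fun ρ : ProbabilityMeasure (E × Bool) => (ΦF ρ).testAgainstNN f)
      (𝓝 ρ0) (𝓝 ((ΦF ρ0).testAgainstNN f))
    rw [hre, hfB]
    exact (ProbabilityMeasure.continuous_testAgainstNN_eval fB).tendsto ρ0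
  have hΦs : Function.Surjective Φ := by
    rintro ⟨μ, hμ⟩
    obtain ⟨x0⟩ := (inferInstance : Nonempty E)
    have hμ1 : (μ : Measure E) univ ≤ 1 := by
      have h2 : ((μ Set.univ : ℝ≥0) : ℝ≥0∞) ≤ 1 := by exact_mod_cast hμ
      rwa [FiniteMeasure.ennreal_coeFn_eq_coeFn_toMeasure] at h2
    have hmt : Measurable (fun x : E => (x, true)) := by
      exact measurable_id.prodMk measurable_const
    set ρM : Measure (E × Bool) :=
      (μ : Measure E).map (fun x => (x, true))
        + ((1 : ℝ≥0∞) - (μ : Measure E) univ) • Measure.dirac (x0, false) with hρM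
    haveI hρMP : IsProbabilityMeasure ρM := by
      constructor
      have hd : Measure.dirac (x0, false) (univ : Set (E × Bool)) = 1 := by simp
      rw [hρM, Measure.add_apply, Measure.smul_apply,
        Measure.map_apply hmt MeasurableSet.univ, preimage_univ, hd,
        smul_eq_mul, mul_one, add_comm]
      exact tsub_add_cancel_of_le hμ1
    refine ⟨⟨ρM, hρMP⟩, ?_⟩
    apply Subtype.ext
    apply Subtype.ext
    show ((ρM.restrict {q | q.2 = true}).map Prod.fst) = (μ : Measure E)
    ext s hs
    have hset : MeasurableSet ((Prod.fst ⁻¹' s) ∩ {q : E × Bool | q.2 = true}) :=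
      (hs.preimage measurable_fst).inter hAmeas
    rw [Measure.map_apply measurable_fst hs,
      Measure.restrict_apply (hs.preimage measurable_fst), hρM, Measure.add_apply,
      Measure.smul_apply, Measure.map_apply hmt hset, Measure.dirac_apply' _ hset]
    have h1 : (fun x : E => (x, true)) ⁻¹' ((Prod.fst ⁻¹' s) ∩ {q : E × Bool | q.2 = true})
        = s := by
      ext x
      simp
    have h2 : (x0, false) ∉ (Prod.fst ⁻¹' s) ∩ {q : E × Bool | q.2 = true} := by
      simp
    rw [h1, indicator_of_notMem h2]
    simp
  exact ⟨hΦs.range_eq ▸ isCompact_range hΦc⟩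

end SubProbCompact


section Framework


variable {S W A : Type*}
variable [MetricSpace S] [CompactSpace S] [Nonempty S]
  [MeasurableSpace S] [BorelSpace S] [SecondCountableTopology S]
variable [Fintype W] [Nonempty W] [TopologicalSpace W] [DiscreteTopology W]
  [MeasurableSpace W] [BorelSpace W]
variable [MetricSpace A] [CompactSpace A] [Nonempty A] [MeasurableSpace A] [BorelSpace A]
variable {T : ℕ}

variable (P0 : Fin T → W → A → SubProb S → ProbabilityMeasure W)
variable (P1 : Fin T → S → W → SubProb S → ProbabilityMeasure S)

/-- `π⁰_{t+1}(u,{u'};α,m) = ∫_A P⁰_{t+1}(u,a,m,{u'}) α(da)`. -/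
noncomputable def pi0 (t : Fin T) (u : W) (α : ProbabilityMeasure A) (m : SubProb S)
    (u' : W) : ℝ :=
  ∫ a, ((P0 t u a m : Measure W) {u'}).toReal ∂(α : Measure A)

/-- The one-step generator
`L(φ)(t,x,u;α,m) = ∫_{S×W} [φ(t+1,x',u') - φ(t,x,u)] π_{t+1}(x,u;α,m;dx',du')`,
written out using `π_{t+1} = P_{t+1} ⊗ π⁰_{t+1}` and the finiteness of `W`. -/
noncomputable def Lgen (φ : ℕ → S → W → ℝ) (t : Fin T) (x : S) (u : W)
    (α : ProbabilityMeasure A) (m : SubProb S) : ℝ :=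
  (∑ u' : W, pi0 P0 t u α m u' * ∫ x', φ ((t : ℕ) + 1) x' u' ∂(P1 t x u m : Measure S))
    - φ (t : ℕ) x u

/-- The linear-programming constraint set `R[m;α]` of admissible occupation-measure pairs. -/
def constraintSet (m0 : ProbabilityMeasure (S × W))
    (m : Fin T → W → SubProb S) (α : Fin T → W → ProbabilityMeasure A) :
    Set ((Fin (T + 1) → SubProb (S × W)) × (Fin T → SubProb (S × W))) :=
  {p | ∀ φ : ℕ → S → W → ℝ,
    (∀ t : ℕ, Continuous fun q : S × W => φ t q.1 q.2) →
    (∀ t : ℕ, ∃ C : ℝ, ∀ x u, |φ t x u| ≤ C) →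
    (∑ t : Fin (T + 1), ∫ q : S × W, φ (t : ℕ) q.1 q.2 ∂((p.1 t).1 : Measure (S × W)))
      = (∫ q : S × W, φ 0 q.1 q.2 ∂(m0 : Measure (S × W)))
        + ∑ t : Fin T, ∫ q : S × W,
            Lgen P0 P1 φ t q.1 q.2 (α t q.2) (m t q.2) ∂((p.2 t).1 : Measure (S × W))}

end Framework

/-- Under Assumption A1 (continuity of the transition kernels
`(a,m) ↦ P⁰_{k+1}(u,a,m,·)` and `(x,m) ↦ P_{k+1}(x,u,m,·)`), for every mean-field flow
`m ∈ C_m` and every relaxed control `α ∈ 𝒜`, the constraint set `R[m;α]` is a compact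
subset of `𝒱 = ∏_{t=0}^{T} 𝒫^sub(S×W) × ∏_{t=0}^{T-1} 𝒫^sub(S×W)` with the product
topology of weak convergence. -/
theorem constraintSet_isCompact
    {S W A : Type*}
    [MetricSpace S] [CompactSpace S] [Nonempty S]
    [MeasurableSpace S] [BorelSpace S] [SecondCountableTopology S]
    [Fintype W] [Nonempty W] [TopologicalSpace W] [DiscreteTopology W]
    [MeasurableSpace W] [BorelSpace W]
    [MetricSpace A] [CompactSpace A] [Nonempty A] [MeasurableSpace A] [BorelSpace A]
    {T : ℕ}
    (P0 : Fin T → W → A → SubProb S → ProbabilityMeasure W)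
    (P1 : Fin T → S → W → SubProb S → ProbabilityMeasure S)
    (hP0 : ∀ (t : Fin T) (u : W),
      Continuous fun z : A × SubProb S => P0 t u z.1 z.2)
    (hP1 : ∀ (t : Fin T) (u : W),
      Continuous fun z : S × SubProb S => P1 t z.1 u z.2)
    (m0 : ProbabilityMeasure (S × W))
    (m : Fin T → W → SubProb S) (α : Fin T → W → ProbabilityMeasure A) :
    IsCompact (constraintSet P0 P1 m0 m α) := by
  classical
  haveI : CompactSpace (SubProb (S × W)) := subProb_compactSpace (E := S × W)
  apply IsClosed.isCompact
  have hrep : constraintSet P0 P1 m0 m α =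
      ⋂ (φ : ℕ → S → W → ℝ), ⋂ (_ : ∀ t : ℕ, Continuous fun q : S × W => φ t q.1 q.2),
        ⋂ (_ : ∀ t : ℕ, ∃ C : ℝ, ∀ x u, |φ t x u| ≤ C),
        {p : (Fin (T + 1) → SubProb (S × W)) × (Fin T → SubProb (S × W)) |
          (∑ t : Fin (T + 1), ∫ q : S × W, φ (t : ℕ) q.1 q.2 ∂((p.1 t).1 : Measure (S × W)))
            = (∫ q : S × W, φ 0 q.1 q.2 ∂(m0 : Measure (S × W)))
              + ∑ t : Fin T, ∫ q : S × W,
                  Lgen P0 P1 φ t q.1 q.2 (α t q.2) (m t q.2) ∂((p.2 t).1 : Measure (S × W))} := by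
    ext p
    simp only [constraintSet, Set.mem_setOf_eq, Set.mem_iInter]
  rw [hrep]
  refine isClosed_iInter fun φ => isClosed_iInter fun hφ => isClosed_iInter fun _ => ?_
  refine isClosed_eq ?_ ?_
  · apply continuous_finset_sum
    intro t _
    exact (FiniteMeasure.continuous_integral_boundedContinuousFunction
        (mkOfCompact ⟨fun q : S × W => φ (t : ℕ) q.1 q.2, hφ (t : ℕ)⟩)).comp
      (continuous_subtype_val.comp ((continuous_apply t).comp continuous_fst))
  · apply Continuous.add continuous_const
    apply continuous_finset_sum
    intro t _
    have hslice : ∀ u : W, Continuous fun x : S =>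
        Lgen P0 P1 φ t x u (α t u) (m t u) := by
      intro u
      have h1 : Continuous fun x : S => φ (t : ℕ) x u :=
        (hφ (t : ℕ)).comp (continuous_id.prodMk continuous_const)
      have h2 : ∀ u' : W, Continuous fun x : S =>
          ∫ x', φ ((t : ℕ) + 1) x' u' ∂(P1 t x u (m t u) : Measure S) := by
        intro u'
        have hk : Continuous fun x : S => P1 t x u (m t u) :=
          (hP1 t u).comp (continuous_id.prodMk continuous_const)
        have hi : Continuous fun ρ : ProbabilityMeasure S =>
            ∫ x', (mkOfCompact ⟨fun x' => φ ((t : ℕ) + 1) x' u',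
              (hφ ((t : ℕ) + 1)).comp (continuous_id.prodMk continuous_const)⟩ :
                S →ᵇ ℝ) x' ∂(ρ : Measure S) :=
          ProbabilityMeasure.continuous_integral_boundedContinuousFunction _
        exact hi.comp hk
      show Continuous fun x : S =>
        (∑ u' : W, pi0 P0 t u (α t u) (m t u) u'
          * ∫ x', φ ((t : ℕ) + 1) x' u' ∂(P1 t x u (m t u) : Measure S)) - φ (t : ℕ) x u
      apply Continuous.sub ?_ h1
      apply continuous_finset_sum
      intro u' _
      exact continuous_const.mul (h2 u')
    have hG : Continuous fun q : S × W =>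
        Lgen P0 P1 φ t q.1 q.2 (α t q.2) (m t q.2) := by
      have hrw : (fun q : S × W => Lgen P0 P1 φ t q.1 q.2 (α t q.2) (m t q.2))
          = fun q => ∑ u : W, (if q.2 = u then (1 : ℝ) else 0)
              * Lgen P0 P1 φ t q.1 u (α t u) (m t u) := by
        funext q
        rw [Finset.sum_eq_single q.2]
        · simp
        · intro b _ hb
          simp [Ne.symm hb]
        · intro h
          exact absurd (Finset.mem_univ q.2) h
      rw [hrw]
      apply continuous_finset_sum
      intro u _
      exact Continuous.mul
        ((continuous_of_discreteTopology
          (f := fun v : W => if v = u then (1 : ℝ) else 0)).comp continuous_snd)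
        ((hslice u).comp continuous_fst)
    exact (FiniteMeasure.continuous_integral_boundedContinuousFunction
        (mkOfCompact ⟨_, hG⟩)).comp
      (continuous_subtype_val.comp ((continuous_apply t).comp continuous_snd))
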